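/- Let P be the canonical probability measure on the Cantor set, n ≥ 2, and let ℓ(n) be the unique natural number with 2^{ℓ(n)} ≤ n < 2^{ℓ(n)+1}. For I ⊂ {1,2}^{ℓ(n)} with card(I) = n - 2^{ℓ(n)}, let α_n(I) = {(a(σ), 1/n) : σ ∈ {1,2}^{ℓ(n)} \ I} ∪ {(a(σ1), 1/n) : σ ∈ I} ∪ {(a(σ2), 1/n) : σ ∈ I}, where a(σ) = T_σ(1/2). Then the distortion error ∫ min_{a ∈ α_n(I)} ρ(x,a) dP(x) equals (1/18^{ℓ(n)}) · (1/8) · (2^{ℓ(n)+1} - n + (n - 2^{ℓ(n)})/9) + 1/n². -/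

import Mathlib

open MeasureTheory Real Set Filter
open scoped ENNReal Topology

noncomputable section

/-- First generating map of the Cantor set. -/
def T1 (x : ℝ) : ℝ := x / 3

/-- Second generating map of the Cantor set. -/
def T2 (x : ℝ) : ℝ := x / 3 + 2 / 3

/-- Map indexed by `Fin 2`. -/
def Tm : Fin 2 → ℝ → ℝ := ![T1, T2]

/-- Composition `T_σ = T_{σ₁} ∘ ⋯ ∘ T_{σ_k}` for a word over `{1,2}` (as a list over `Fin 2`). -/
def Tw (l : List (Fin 2)) : ℝ → ℝ := l.foldr (fun i g => Tm i ∘ g) id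

/-- Squared Euclidean distance between `x ∈ ℝ` (identified with `(x,0)`) and `(a,b) ∈ ℝ²`. -/
def rho (x : ℝ) (p : ℝ × ℝ) : ℝ := (x - p.1) ^ 2 + p.2 ^ 2

/-- Distortion error of a set `α ⊆ ℝ²` for `P`. -/
def distortion (P : Measure ℝ) (α : Set (ℝ × ℝ)) : ℝ := ∫ x, ⨅ a : α, rho x (a : ℝ × ℝ) ∂P

/-- The constraint `S_j = {(x, 1/j) : 0 ≤ x ≤ 1}`. -/
def Sj (j : ℕ) : Set (ℝ × ℝ) := {p | p.1 ∈ Icc (0 : ℝ) 1 ∧ p.2 = 1 / (j : ℝ)}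

/-- The `n`th constrained quantization error for `P` with respect to the family `Sj`. -/
def Vc (P : Measure ℝ) (n : ℕ) : ℝ :=
  sInf {e : ℝ | ∃ α : Finset (ℝ × ℝ), α.Nonempty ∧ α.card ≤ n ∧
    (↑α : Set (ℝ × ℝ)) ⊆ ⋃ j ∈ Finset.Icc 1 n, Sj j ∧ e = distortion P (↑α : Set (ℝ × ℝ))}

-- q setup
def qf (s : Finset ℝ) (x : ℝ) : ℝ :=
  if h : s.Nonempty then s.inf' h (fun a => (x - a) ^ 2) else 0

lemma qf_eq {s : Finset ℝ} (h : s.Nonempty) (x : ℝ) :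
    qf s x = s.inf' h (fun a => (x - a) ^ 2) := dif_pos h

lemma iInf_coe_finset {β : Type*} (s : Finset β) (h : s.Nonempty) (f : β → ℝ) :
    (⨅ i : (↑s : Set β), f i) = s.inf' h f := by
  rw [Finset.inf'_eq_csInf_image, iInf]
  congr 1
  ext y
  simp [Set.range]

lemma continuous_inf' {ι : Type*} (s : Finset ι) (h : s.Nonempty) (f : ι → ℝ → ℝ)
    (hf : ∀ i, Continuous (f i)) : Continuous fun x => s.inf' h fun i => f i x := by
  induction h using Finset.Nonempty.cons_induction with
  | singleton i => simpa using hf i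
  | cons i s his hs ih =>
      simp only [Finset.inf'_cons (H := hs)]
      exact Continuous.min (hf i) ih

lemma inf'_add_const {ι : Type*} (s : Finset ι) (h : s.Nonempty) (f : ι → ℝ) (c : ℝ) :
    (s.inf' h fun i => f i + c) = s.inf' h f + c := by
  induction h using Finset.Nonempty.cons_induction with
  | singleton i => simp
  | cons i s his hs ih => simp only [Finset.inf'_cons (H := hs), ih, min_add_add_right]

lemma inf'_const_mul {ι : Type*} (s : Finset ι) (h : s.Nonempty) (f : ι → ℝ) (c : ℝ)
    (hc : 0 ≤ c) : (s.inf' h fun i => c * f i) = c * s.inf' h f := by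
  induction h using Finset.Nonempty.cons_induction with
  | singleton i => simp
  | cons i s his hs ih => simp only [Finset.inf'_cons (H := hs), ih, mul_min_of_nonneg _ _ hc]

lemma qf_continuous {s : Finset ℝ} (h : s.Nonempty) : Continuous (qf s) := by
  have e : qf s = fun x => s.inf' h fun a => (x - a) ^ 2 := funext fun x => qf_eq h x
  rw [e]
  exact continuous_inf' s h _ (fun a => by continuity)

lemma qf_nonneg {s : Finset ℝ} (x : ℝ) : 0 ≤ qf s x := by
  by_cases h : s.Nonempty
  · rw [qf_eq h]; exact Finset.le_inf' h _ (fun b _ => sq_nonneg _)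
  · simp [qf, h]

lemma qf_le_one {s : Finset ℝ} (h : s.Nonempty) (hs : ↑s ⊆ Icc (0:ℝ) 1) {x : ℝ}
    (hx : x ∈ Icc (0:ℝ) 1) : qf s x ≤ 1 := by
  obtain ⟨a, ha⟩ := id h
  have haI : a ∈ Icc (0:ℝ) 1 := hs ha
  rw [qf_eq h]
  calc s.inf' h (fun a => (x - a) ^ 2) ≤ (x - a) ^ 2 := Finset.inf'_le _ ha
  _ ≤ 1 := by
      simp only [mem_Icc] at hx haI
      nlinarith [hx.1, hx.2, haI.1, haI.2]

lemma qf_union {s₀ s₁ : Finset ℝ} (h₀ : s₀.Nonempty) (h₁ : s₁.Nonempty) (x : ℝ) :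
    qf (s₀ ∪ s₁) x = min (qf s₀ x) (qf s₁ x) := by
  rw [qf_eq (h₀.mono Finset.subset_union_left), qf_eq h₀, qf_eq h₁,
    Finset.inf'_union h₀ h₁]

-- maps
lemma Tm_zero : Tm 0 = T1 := rfl
lemma Tm_one : Tm 1 = T2 := rfl

lemma Tm_maps (i : Fin 2) {x : ℝ} (hx : x ∈ Icc (0:ℝ) 1) : Tm i x ∈ Icc (0:ℝ) 1 := by
  simp only [mem_Icc] at hx ⊢
  fin_cases i <;> simp [Tm, T1, T2] <;> constructor <;> linarith [hx.1, hx.2]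

lemma Tw_maps (l : List (Fin 2)) {x : ℝ} (hx : x ∈ Icc (0:ℝ) 1) : Tw l x ∈ Icc (0:ℝ) 1 := by
  induction l with
  | nil => exact hx
  | cons i l ih => exact Tm_maps i ih

lemma Tw_nil (x : ℝ) : Tw [] x = x := rfl

lemma Tw_cons (i : Fin 2) (l : List (Fin 2)) (y : ℝ) : Tw (i :: l) y = Tm i (Tw l y) := rfl

lemma Tw_ofFn_cons {ℓ : ℕ} (i : Fin 2) (τ : Fin ℓ → Fin 2) (y : ℝ) :
    Tw (List.ofFn (Fin.cons i τ)) y = Tm i (Tw (List.ofFn τ) y) := by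
  rw [List.ofFn_succ]
  simp only [Fin.cons_succ, Fin.cons_zero, Tw_cons]

lemma T1_affine (x a : ℝ) : (T1 x - T1 a) ^ 2 = (1/9) * (x - a) ^ 2 := by
  simp only [T1]; ring

lemma T2_affine (x a : ℝ) : (T2 x - T2 a) ^ 2 = (1/9) * (x - a) ^ 2 := by
  simp only [T2]; ring

lemma qf_image_T1 {s : Finset ℝ} (h : s.Nonempty) (x : ℝ) :
    qf (s.image T1) (T1 x) = (1/9) * qf s x := by
  rw [qf_eq (h.image T1), Finset.inf'_image (h.image T1), qf_eq h, ← inf'_const_mul _ h _ _ (by norm_num)]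
  congr 1
  ext a
  exact T1_affine x a

lemma qf_image_T2 {s : Finset ℝ} (h : s.Nonempty) (x : ℝ) :
    qf (s.image T2) (T2 x) = (1/9) * qf s x := by
  rw [qf_eq (h.image T2), Finset.inf'_image (h.image T2), qf_eq h, ← inf'_const_mul _ h _ _ (by norm_num)]
  congr 1
  ext a
  exact T2_affine x a

lemma qf_branch_left {s₀ s₁ : Finset ℝ} (h₀ : s₀.Nonempty) (h₁ : s₁.Nonempty)
    (hs₀ : ↑s₀ ⊆ Icc (0:ℝ) 1) (hs₁ : ↑s₁ ⊆ Icc (0:ℝ) 1) {x : ℝ} (hx : x ∈ Icc (0:ℝ) 1) :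
    qf (s₀.image T1 ∪ s₁.image T2) (T1 x) = (1/9) * qf s₀ x := by
  rw [qf_union (h₀.image T1) (h₁.image T2), qf_image_T1 h₀]
  refine min_eq_left ?_
  have hle : (1/9 : ℝ) * qf s₀ x ≤ 1/9 := by
    have := qf_le_one h₀ hs₀ hx
    linarith
  refine hle.trans ?_
  rw [qf_eq (h₁.image T2)]
  refine Finset.le_inf' _ _ ?_
  intro b hb
  obtain ⟨a, ha, rfl⟩ := Finset.mem_image.mp hb
  have haI := hs₁ ha
  simp only [mem_Icc] at haI hx
  have h1 : T1 x ≤ 1/3 := by simp only [T1]; linarith [hx.2]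
  have h2 : (2:ℝ)/3 ≤ T2 a := by simp only [T2]; linarith [haI.1]
  nlinarith [h1, h2, hx.1, haI.2]

lemma qf_branch_right {s₀ s₁ : Finset ℝ} (h₀ : s₀.Nonempty) (h₁ : s₁.Nonempty)
    (hs₀ : ↑s₀ ⊆ Icc (0:ℝ) 1) (hs₁ : ↑s₁ ⊆ Icc (0:ℝ) 1) {x : ℝ} (hx : x ∈ Icc (0:ℝ) 1) :
    qf (s₀.image T1 ∪ s₁.image T2) (T2 x) = (1/9) * qf s₁ x := by
  rw [qf_union (h₀.image T1) (h₁.image T2), qf_image_T2 h₁]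
  refine min_eq_right ?_
  have hle : (1/9 : ℝ) * qf s₁ x ≤ 1/9 := by
    have := qf_le_one h₁ hs₁ hx
    linarith
  refine hle.trans ?_
  rw [qf_eq (h₀.image T1)]
  refine Finset.le_inf' _ _ ?_
  intro b hb
  obtain ⟨a, ha, rfl⟩ := Finset.mem_image.mp hb
  have haI := hs₀ ha
  simp only [mem_Icc] at haI hx
  have h1 : T1 a ≤ 1/3 := by simp only [T1]; linarith [haI.2]
  have h2 : (2:ℝ)/3 ≤ T2 x := by simp only [T2]; linarith [hx.1]
  nlinarith [h1, h2, hx.2, haI.1]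

-- measure section
section MeasureFacts

variable (P : Measure ℝ) [IsProbabilityMeasure P]
  (hP : P = (1 / 2 : ℝ≥0∞) • P.map T1 + (1 / 2 : ℝ≥0∞) • P.map T2)

lemma measurable_T1 : Measurable T1 := by unfold T1; fun_prop
lemma measurable_T2 : Measurable T2 := by unfold T2; fun_prop

include hP in
lemma P_apply (A : Set ℝ) (hA : MeasurableSet A) :
    P A = (1/2) * P (T1 ⁻¹' A) + (1/2) * P (T2 ⁻¹' A) := by
  conv_lhs => rw [hP]
  rw [Measure.add_apply, Measure.smul_apply, Measure.smul_apply,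
    Measure.map_apply measurable_T1 hA, Measure.map_apply measurable_T2 hA]
  simp [ENNReal.smul_def]

include hP in
lemma P_step (t : ℝ) (ht : 0 ≤ t) :
    P (Icc (-(3*t)) (1 + 3*t)) ≤ P (Icc (-t) (1 + t)) := by
  conv_rhs => rw [P_apply P hP _ measurableSet_Icc]
  have h1 : Icc (-(3*t)) (1 + 3*t) ⊆ T1 ⁻¹' Icc (-t) (1 + t) := by
    intro x hx
    simp only [mem_Icc, mem_preimage, T1] at hx ⊢
    constructor <;> [linarith [hx.1]; linarith [hx.2]]
  have h2 : Icc (-(3*t)) (1 + 3*t) ⊆ T2 ⁻¹' Icc (-t) (1 + t) := by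
    intro x hx
    simp only [mem_Icc, mem_preimage, T2] at hx ⊢
    constructor <;> [linarith [hx.1]; linarith [hx.2]]
  calc P (Icc (-(3*t)) (1 + 3*t))
      = (1/2) * P (Icc (-(3*t)) (1 + 3*t)) + (1/2) * P (Icc (-(3*t)) (1 + 3*t)) := by
        rw [← add_mul]
        norm_num [ENNReal.inv_two_add_inv_two]
  _ ≤ (1/2) * P (T1 ⁻¹' Icc (-t) (1+t)) + (1/2) * P (T2 ⁻¹' Icc (-t) (1+t)) :=
        add_le_add (mul_le_mul_right (measure_mono h1) _) (mul_le_mul_right (measure_mono h2) _)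

include hP in
lemma P_Icc_one (t : ℝ) (ht : 0 < t) : P (Icc (-t) (1 + t)) = 1 := by
  have key : ∀ k : ℕ, P (Icc (-(3^k * t)) (1 + 3^k * t)) ≤ P (Icc (-t) (1 + t)) := by
    intro k
    induction k with
    | zero => simp
    | succ k ih =>
        refine le_trans ?_ ih
        have e : (3:ℝ)^(k+1) * t = 3 * (3^k * t) := by ring
        rw [e]
        exact P_step P hP _ (by positivity)
  have hmono : Monotone fun k : ℕ => Icc (-(3^k * t)) (1 + 3^k * t) := by
    intro a b hab
    apply Icc_subset_Icc
    · simp only [neg_le_neg_iff]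
      have : (3:ℝ)^a ≤ 3^b := pow_le_pow_right₀ (by norm_num) hab
      nlinarith
    · have : (3:ℝ)^a ≤ 3^b := pow_le_pow_right₀ (by norm_num) hab
      nlinarith
  have hunion : ⋃ k : ℕ, Icc (-(3^k * t)) (1 + 3^k * t) = univ := by
    ext x
    simp only [mem_iUnion, mem_Icc, mem_univ, iff_true]
    obtain ⟨k, hk⟩ := pow_unbounded_of_one_lt ((|x|+1) / t) (by norm_num : (1:ℝ) < 3)
    rw [div_lt_iff₀ ht] at hk
    have h1 := neg_abs_le x
    have h2 := le_abs_self x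
    exact ⟨k, by linarith, by linarith⟩
  have htend := tendsto_measure_iUnion_atTop (μ := P) hmono
  rw [hunion] at htend
  have hle : (1:ℝ≥0∞) ≤ P (Icc (-t) (1 + t)) := by
    have : P univ = 1 := measure_univ
    rw [this] at htend
    exact le_of_tendsto htend (Filter.Eventually.of_forall key)
  exact le_antisymm prob_le_one hle

include hP in
lemma P_ae_Icc : ∀ᵐ x ∂P, x ∈ Icc (0:ℝ) 1 := by
  have hnull : P (Icc (0:ℝ) 1)ᶜ = 0 := by
    have hsub : (Icc (0:ℝ) 1)ᶜ ⊆ ⋃ k : ℕ, (Icc (-(1/(k+1) : ℝ)) (1 + 1/(k+1)))ᶜ := by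
      intro x hx
      simp only [mem_compl_iff, mem_Icc, not_and_or, not_le] at hx
      simp only [mem_iUnion, mem_compl_iff, mem_Icc, not_and_or, not_le]
      rcases hx with hx | hx
      · obtain ⟨k, hk⟩ := exists_nat_one_div_lt (by linarith : (0:ℝ) < -x)
        exact ⟨k, Or.inl (by push_cast at hk ⊢; linarith)⟩
      · obtain ⟨k, hk⟩ := exists_nat_one_div_lt (by linarith : (0:ℝ) < x - 1)
        exact ⟨k, Or.inr (by push_cast at hk ⊢; linarith)⟩
    refine measure_mono_null hsub (measure_iUnion_null fun k => ?_)
    have h1 : P (Icc (-(1/(k+1) : ℝ)) (1 + 1/(k+1))) = 1 := P_Icc_one P hP _ (by positivity)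
    have := measure_compl (μ := P) (s := Icc (-(1/(k+1) : ℝ)) (1 + 1/(k+1))) measurableSet_Icc (measure_ne_top P _)
    rw [h1, measure_univ] at this
    rw [this]
    simp
  exact hnull

include hP in
lemma integrable_cont {g : ℝ → ℝ} (hg : Continuous g) : Integrable g P := by
  obtain ⟨C, hC⟩ := isCompact_Icc.exists_bound_of_continuousOn (f := g) hg.continuousOn
  refine Integrable.mono' (integrable_const C) hg.aestronglyMeasurable ?_
  filter_upwards [P_ae_Icc P hP] with x hx
  exact hC x hx

include hP in
lemma int_rec {g : ℝ → ℝ} (hg : Continuous g) :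
    ∫ x, g x ∂P = (1/2) * ∫ x, g (T1 x) ∂P + (1/2) * ∫ x, g (T2 x) ∂P := by
  have hmap1 : Integrable g (P.map T1) := by
    rw [integrable_map_measure hg.aestronglyMeasurable measurable_T1.aemeasurable]
    exact integrable_cont P hP (hg.comp (by unfold T1; fun_prop))
  have hmap2 : Integrable g (P.map T2) := by
    rw [integrable_map_measure hg.aestronglyMeasurable measurable_T2.aemeasurable]
    exact integrable_cont P hP (hg.comp (by unfold T2; fun_prop))
  conv_lhs => rw [hP]
  rw [integral_add_measure (hmap1.smul_measure (by norm_num)) (hmap2.smul_measure (by norm_num)),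
    integral_smul_measure, integral_smul_measure,
    integral_map measurable_T1.aemeasurable hg.aestronglyMeasurable,
    integral_map measurable_T2.aemeasurable hg.aestronglyMeasurable]
  norm_num [ENNReal.toReal_div]

include hP in
lemma P_var : ∫ x, (x - 1/2)^2 ∂P = 1/8 := by
  have hcont : Continuous fun x : ℝ => (x - 1/2)^2 := by fun_prop
  have h := int_rec P hP hcont
  have e1 : ∀ x : ℝ, (T1 x - 1/2)^2 = (1/9) * (x - 1/2)^2 + ((-2/9) * (x - 1/2) + 1/9) := by
    intro x; simp only [T1]; ring
  have e2 : ∀ x : ℝ, (T2 x - 1/2)^2 = (1/9) * (x - 1/2)^2 + ((2/9) * (x - 1/2) + 1/9) := by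
    intro x; simp only [T2]; ring
  have i1 : Integrable (fun x : ℝ => (1/9) * (x - 1/2)^2) P :=
    integrable_cont P hP (by fun_prop)
  have i2 : Integrable (fun x : ℝ => (-2/9) * (x - 1/2) + 1/9) P :=
    integrable_cont P hP (by fun_prop)
  have i3 : Integrable (fun x : ℝ => (2/9) * (x - 1/2) + 1/9) P :=
    integrable_cont P hP (by fun_prop)
  have i4 : Integrable (fun x : ℝ => x - 1/2) P := integrable_cont P hP (by fun_prop)
  simp only [e1, e2] at h
  rw [integral_add i1 i2, integral_add i1 i3] at h
  rw [integral_const_mul] at h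
  have hm : ∫ x, ((-2:ℝ)/9 * (x - 1/2) + 1/9) ∂P + ∫ x, ((2:ℝ)/9 * (x - 1/2) + 1/9) ∂P
      = 2/9 := by
    rw [← integral_add i2 i3]
    have : (fun x : ℝ => ((-2:ℝ)/9 * (x - 1/2) + 1/9) + ((2:ℝ)/9 * (x - 1/2) + 1/9))
        = fun _ : ℝ => (2/9 : ℝ) := by funext x; ring
    rw [this, integral_const]
    simp
  linarith [h, hm]

end MeasureFacts

-- pts
def pts (ℓ : ℕ) (I : Finset (Fin ℓ → Fin 2)) : Finset ℝ :=
  ((Finset.univ \ I).image fun σ => Tw (List.ofFn σ) (1/2)) ∪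
    (I.image fun σ => Tw (List.ofFn σ) (T1 (1/2))) ∪
    (I.image fun σ => Tw (List.ofFn σ) (T2 (1/2)))

lemma pts_nonempty (ℓ : ℕ) (I : Finset (Fin ℓ → Fin 2)) : (pts ℓ I).Nonempty := by
  rcases (Finset.univ \ I).eq_empty_or_nonempty with h | h
  · have hI : I.Nonempty := by
      rcases Finset.univ_nonempty (α := Fin ℓ → Fin 2) with ⟨σ, hσ⟩
      refine ⟨σ, ?_⟩
      by_contra hσI
      exact Finset.notMem_empty σ (h ▸ Finset.mem_sdiff.mpr ⟨hσ, hσI⟩)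
    exact Finset.Nonempty.mono Finset.subset_union_right (hI.image _)
  · exact Finset.Nonempty.mono (Finset.subset_union_left.trans Finset.subset_union_left)
      (h.image _)

lemma pts_subset (ℓ : ℕ) (I : Finset (Fin ℓ → Fin 2)) : ↑(pts ℓ I) ⊆ Icc (0:ℝ) 1 := by
  intro a ha
  simp only [pts, Finset.coe_union, Set.mem_union, Finset.mem_coe, Finset.mem_image] at ha
  have h12 : (1/2 : ℝ) ∈ Icc (0:ℝ) 1 := by norm_num
  rcases ha with (⟨σ, _, rfl⟩ | ⟨σ, _, rfl⟩) | ⟨σ, _, rfl⟩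
  · exact Tw_maps _ h12
  · exact Tw_maps _ (Tm_maps 0 h12)
  · exact Tw_maps _ (Tm_maps 1 h12)

def Itl {ℓ : ℕ} (J : Finset (Fin (ℓ+1) → Fin 2)) (i : Fin 2) : Finset (Fin ℓ → Fin 2) :=
  (J.filter (fun σ => σ 0 = i)).image Fin.tail

lemma mem_Itl {ℓ : ℕ} (J : Finset (Fin (ℓ+1) → Fin 2)) (i : Fin 2) (τ : Fin ℓ → Fin 2) :
    τ ∈ Itl J i ↔ Fin.cons i τ ∈ J := by
  simp only [Itl, Finset.mem_image, Finset.mem_filter]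
  constructor
  · rintro ⟨σ, ⟨hσ, h0⟩, rfl⟩
    rwa [← h0, Fin.cons_self_tail]
  · intro h
    exact ⟨Fin.cons i τ, ⟨h, Fin.cons_zero _ _⟩, Fin.tail_cons _ _⟩

lemma Itl_card {ℓ : ℕ} (J : Finset (Fin (ℓ+1) → Fin 2)) :
    (Itl J 0).card + (Itl J 1).card = J.card := by
  have hinj : ∀ i : Fin 2, Set.InjOn (Fin.tail : (Fin (ℓ+1) → Fin 2) → (Fin ℓ → Fin 2)) ↑(J.filter (fun σ => σ 0 = i)) := by
    intro i σ₁ h₁ σ₂ h₂ he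
    simp only [Finset.coe_filter, Set.mem_setOf_eq] at h₁ h₂
    have hc : Fin.cons i (Fin.tail σ₁) = Fin.cons i (Fin.tail σ₂) := by rw [he]
    have e1 : Fin.cons i (Fin.tail σ₁) = σ₁ := by rw [← h₁.2]; exact Fin.cons_self_tail σ₁
    have e2 : Fin.cons i (Fin.tail σ₂) = σ₂ := by rw [← h₂.2]; exact Fin.cons_self_tail σ₂
    rwa [e1, e2] at hc
  rw [Itl, Itl, Finset.card_image_of_injOn (hinj 0), Finset.card_image_of_injOn (hinj 1)]
  have : J.filter (fun σ => σ 0 = 1) = J.filter (fun σ => ¬ σ 0 = 0) := by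
    apply Finset.filter_congr
    intro σ _
    constructor
    · intro h; simp [h]
    · intro h
      have : ∀ a : Fin 2, ¬ a = 0 → a = 1 := by decide
      exact this _ h
  rw [this]
  exact Finset.card_filter_add_card_filter_not _

lemma image_split {ℓ : ℕ} (J : Finset (Fin (ℓ+1) → Fin 2)) (F : (Fin (ℓ+1) → Fin 2) → ℝ) :
    J.image F = (Itl J 0).image (fun τ => F (Fin.cons 0 τ))
      ∪ (Itl J 1).image (fun τ => F (Fin.cons 1 τ)) := by
  rw [Itl, Itl, Finset.image_image, Finset.image_image]
  have h0 : (J.filter (fun σ => σ 0 = 0)).image ((fun τ => F (Fin.cons 0 τ)) ∘ Fin.tail)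
      = (J.filter (fun σ => σ 0 = 0)).image F := by
    apply Finset.image_congr
    intro σ hσ
    simp only [Finset.coe_filter, Set.mem_setOf_eq] at hσ
    simp only [Function.comp_apply]
    rw [← hσ.2, Fin.cons_self_tail]
  have h1 : (J.filter (fun σ => σ 0 = 1)).image ((fun τ => F (Fin.cons 1 τ)) ∘ Fin.tail)
      = (J.filter (fun σ => σ 0 = 1)).image F := by
    apply Finset.image_congr
    intro σ hσ
    simp only [Finset.coe_filter, Set.mem_setOf_eq] at hσ
    simp only [Function.comp_apply]
    rw [← hσ.2, Fin.cons_self_tail]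
  rw [h0, h1, ← Finset.image_union]
  congr 1
  ext σ
  simp only [Finset.mem_union, Finset.mem_filter]
  constructor
  · intro h
    have : σ 0 = 0 ∨ σ 0 = 1 := by
      have : ∀ a : Fin 2, a = 0 ∨ a = 1 := by decide
      exact this _
    rcases this with h0 | h1
    · exact Or.inl ⟨h, h0⟩
    · exact Or.inr ⟨h, h1⟩
  · rintro (⟨h, _⟩ | ⟨h, _⟩) <;> exact h

lemma Itl_sdiff {ℓ : ℕ} (I : Finset (Fin (ℓ+1) → Fin 2)) (i : Fin 2) :
    Itl (Finset.univ \ I) i = Finset.univ \ Itl I i := by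
  ext τ
  rw [mem_Itl, Finset.mem_sdiff, Finset.mem_sdiff, mem_Itl]
  simp

lemma pts_succ {ℓ : ℕ} (I : Finset (Fin (ℓ+1) → Fin 2)) :
    pts (ℓ+1) I = (pts ℓ (Itl I 0)).image T1 ∪ (pts ℓ (Itl I 1)).image T2 := by
  have key : ∀ (y : ℝ) (J : Finset (Fin (ℓ+1) → Fin 2)),
      J.image (fun σ => Tw (List.ofFn σ) y)
        = ((Itl J 0).image (fun τ => Tw (List.ofFn τ) y)).image T1
          ∪ ((Itl J 1).image (fun τ => Tw (List.ofFn τ) y)).image T2 := by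
    intro y J
    rw [image_split J (fun σ => Tw (List.ofFn σ) y), Finset.image_image, Finset.image_image]
    congr 1
    · apply Finset.image_congr
      intro τ _
      simp only [Function.comp_apply, Tw_ofFn_cons, Tm_zero]
    · apply Finset.image_congr
      intro τ _
      simp only [Function.comp_apply, Tw_ofFn_cons, Tm_one]
  simp only [pts, key, Itl_sdiff, Finset.image_union]
  ext a
  simp only [Finset.mem_union]
  tauto

section Main

variable (P : Measure ℝ) [IsProbabilityMeasure P]
  (hP : P = (1 / 2 : ℝ≥0∞) • P.map T1 + (1 / 2 : ℝ≥0∞) • P.map T2)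

include hP in
lemma int_branch {s₀ s₁ : Finset ℝ} (h₀ : s₀.Nonempty) (h₁ : s₁.Nonempty)
    (hs₀ : ↑s₀ ⊆ Icc (0:ℝ) 1) (hs₁ : ↑s₁ ⊆ Icc (0:ℝ) 1) :
    ∫ x, qf (s₀.image T1 ∪ s₁.image T2) x ∂P
      = (1/18) * (∫ x, qf s₀ x ∂P) + (1/18) * ∫ x, qf s₁ x ∂P := by
  have hU : (s₀.image T1 ∪ s₁.image T2).Nonempty :=
    Finset.Nonempty.mono Finset.subset_union_left (h₀.image T1)
  rw [int_rec P hP (qf_continuous hU)]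
  have e1 : ∫ x, qf (s₀.image T1 ∪ s₁.image T2) (T1 x) ∂P = (1/9) * ∫ x, qf s₀ x ∂P := by
    rw [← integral_const_mul]
    apply integral_congr_ae
    filter_upwards [P_ae_Icc P hP] with x hx
    exact qf_branch_left h₀ h₁ hs₀ hs₁ hx
  have e2 : ∫ x, qf (s₀.image T1 ∪ s₁.image T2) (T2 x) ∂P = (1/9) * ∫ x, qf s₁ x ∂P := by
    rw [← integral_const_mul]
    apply integral_congr_ae
    filter_upwards [P_ae_Icc P hP] with x hx
    exact qf_branch_right h₀ h₁ hs₀ hs₁ hx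
  rw [e1, e2]
  ring

include hP in
lemma qf_half : ∫ x, qf {(1/2 : ℝ)} x ∂P = 1/8 := by
  have : ∀ x : ℝ, qf {(1/2 : ℝ)} x = (x - 1/2)^2 := by
    intro x
    rw [qf_eq (Finset.singleton_nonempty _), Finset.inf'_singleton]
  rw [funext this]
  exact P_var P hP

include hP in
lemma main_int : ∀ (ℓ : ℕ) (I : Finset (Fin ℓ → Fin 2)),
    ∫ x, qf (pts ℓ I) x ∂P
      = (1/18)^ℓ * (1/8) * ((2^ℓ - (I.card : ℝ)) + (I.card : ℝ)/9) := by
  intro ℓ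
  induction ℓ with
  | zero =>
      intro I
      have huniv : (Finset.univ : Finset (Fin 0 → Fin 2)) = {fun i => i.elim0} := by
        apply Finset.eq_singleton_iff_unique_mem.mpr
        exact ⟨Finset.mem_univ _, fun σ _ => Subsingleton.elim _ _⟩
      have hofn : ∀ σ : Fin 0 → Fin 2, Tw (List.ofFn σ) = id := by
        intro σ
        rw [List.ofFn_zero]
        rfl
      rcases I.eq_empty_or_nonempty with rfl | hne
      · have hpts : pts 0 (∅ : Finset (Fin 0 → Fin 2)) = {(1/2 : ℝ)} := by
          simp [pts, huniv, hofn, Tw_nil]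
        rw [hpts, qf_half P hP]
        norm_num
      · have hIu : I = Finset.univ := by
          obtain ⟨σ₀, hσ₀⟩ := hne
          apply Finset.eq_univ_iff_forall.mpr
          intro σ
          rwa [Subsingleton.elim σ σ₀]
        subst hIu
        have hpts : pts 0 (Finset.univ : Finset (Fin 0 → Fin 2))
            = (({(1/2:ℝ)} : Finset ℝ).image T1) ∪ (({(1/2:ℝ)} : Finset ℝ).image T2) := by
          simp [pts, huniv, hofn, Tw_nil, Finset.sdiff_self]
        rw [hpts, int_branch P hP (Finset.singleton_nonempty _) (Finset.singleton_nonempty _)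
          (by norm_num) (by norm_num), qf_half P hP]
        rw [huniv]
        norm_num
  | succ ℓ ih =>
      intro I
      rw [pts_succ I,
        int_branch P hP (pts_nonempty ℓ (Itl I 0)) (pts_nonempty ℓ (Itl I 1))
          (pts_subset ℓ (Itl I 0)) (pts_subset ℓ (Itl I 1)),
        ih (Itl I 0), ih (Itl I 1)]
      have hc : ((Itl I 0).card : ℝ) + ((Itl I 1).card : ℝ) = (I.card : ℝ) := by
        rw [← Nat.cast_add, Itl_card]
      rw [show ((I.card : ℝ)) = ((Itl I 0).card : ℝ) + ((Itl I 1).card : ℝ) from hc.symm]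
      ring

end Main

theorem distortion_alpha_n (P : Measure ℝ) [IsProbabilityMeasure P]
    (hP : P = (1 / 2 : ℝ≥0∞) • P.map T1 + (1 / 2 : ℝ≥0∞) • P.map T2)
    (n ℓ : ℕ) (hn : 2 ≤ n) (h1 : 2 ^ ℓ ≤ n) (h2 : n < 2 ^ (ℓ + 1))
    (I : Finset (Fin ℓ → Fin 2)) (hI : I.card = n - 2 ^ ℓ) :
    distortion P
      ((fun σ => (Tw (List.ofFn σ) (1 / 2), (1 / n : ℝ))) '' (Set.univ \ (↑I : Set (Fin ℓ → Fin 2))) ∪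
        (fun σ => (Tw (List.ofFn σ) (T1 (1 / 2)), (1 / n : ℝ))) '' (↑I : Set (Fin ℓ → Fin 2)) ∪
        (fun σ => (Tw (List.ofFn σ) (T2 (1 / 2)), (1 / n : ℝ))) '' (↑I : Set (Fin ℓ → Fin 2))) =
      (1 / 18 ^ ℓ) * (1 / 8) * (2 ^ (ℓ + 1) - (n : ℝ) + ((n : ℝ) - 2 ^ ℓ) / 9) +
        1 / (n : ℝ) ^ 2 := by
  have hα : ((fun σ => (Tw (List.ofFn σ) (1 / 2), (1 / n : ℝ))) '' (Set.univ \ (↑I : Set (Fin ℓ → Fin 2))) ∪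
        (fun σ => (Tw (List.ofFn σ) (T1 (1 / 2)), (1 / n : ℝ))) '' (↑I : Set (Fin ℓ → Fin 2)) ∪
        (fun σ => (Tw (List.ofFn σ) (T2 (1 / 2)), (1 / n : ℝ))) '' (↑I : Set (Fin ℓ → Fin 2)))
      = ↑((pts ℓ I).image (fun a => (a, (1 / n : ℝ)))) := by
    rw [Finset.coe_image, pts]
    simp only [Finset.coe_union, Finset.coe_image, Finset.coe_sdiff, Finset.coe_univ,
      Set.image_union, ← Set.image_comp]
    rfl
  rw [hα]
  have hne : ((pts ℓ I).image (fun a => (a, (1 / n : ℝ)))).Nonempty :=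
    (pts_nonempty ℓ I).image _
  have hptw : ∀ x : ℝ,
      (⨅ a : (↑((pts ℓ I).image (fun a => (a, (1 / n : ℝ)))) : Set (ℝ × ℝ)), rho x (a : ℝ × ℝ))
        = qf (pts ℓ I) x + (1 / n : ℝ)^2 := by
    intro x
    rw [iInf_coe_finset _ hne (rho x), Finset.inf'_image hne (rho x)]
    rw [qf_eq (pts_nonempty ℓ I), ← inf'_add_const]
    rfl
  simp only [distortion]
  rw [funext hptw, integral_add (integrable_cont P hP (qf_continuous (pts_nonempty ℓ I)))
    (integrable_const _), integral_const, probReal_univ]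
  rw [main_int P hP ℓ I]
  have hcard : (I.card : ℝ) = (n : ℝ) - 2^ℓ := by
    rw [hI, Nat.cast_sub h1]
    push_cast
    ring
  rw [hcard]
  have h18 : ((1:ℝ)/18)^ℓ = 1/18^ℓ := by
    rw [one_div, one_div, inv_pow]
  rw [h18]
  simp only [ENNReal.toReal_one, one_smul, smul_eq_mul]
  ring
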